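/- Let k ≥ 2 and l ≥ 2 be integers and n = 2^k. Then the Ducci coefficient satisfies a_{l·2^{k−1}, l·2^{k−2}+1} ≡ 2^{l−1} (mod 2^l), where the second index is read modulo n. -/

import Mathlib

/-- The Ducci coefficients `a_{r,s}`, with second index read modulo `n`:
`a_{0,1} = 1`, `a_{0,s} = 0` for `s ≠ 1`, and `a_{r,s} = a_{r-1,s} + a_{r-1,s-1}`. -/
def ducciCoeff (n : ℕ) : ℕ → ZMod n → ℕ
  | 0, s => if s = 1 then 1 else 0
  | r + 1, s => ducciCoeff n r s + ducciCoeff n r (s - 1)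

namespace DucciAux

/-- Core valuation bound: if `j = 2^v * u` with `u` odd and `0 < j < 2^m`,
then `2^(m-v) ∣ C(2^m, j)`. -/
lemma pow_dvd_choose {m v u : ℕ} (hu : ¬ 2 ∣ u) (hjm : 2 ^ v * u < 2 ^ m) :
    2 ^ (m - v) ∣ Nat.choose (2 ^ m) (2 ^ v * u) := by
  set j := 2 ^ v * u with hjdef
  have hu0 : 0 < u := Nat.pos_of_ne_zero (by rintro rfl; exact hu ⟨0, rfl⟩)
  have hj0 : 0 < j := Nat.mul_pos (pow_pos (by norm_num) v) hu0
  have h1 : 0 < 2 ^ m := pow_pos (by norm_num) m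
  have key : 2 ^ m * Nat.choose (2 ^ m - 1) (j - 1) = Nat.choose (2 ^ m) j * j := by
    have h := Nat.add_one_mul_choose_eq (2 ^ m - 1) (j - 1)
    rwa [show 2 ^ m - 1 + 1 = 2 ^ m by omega, show j - 1 + 1 = j by omega] at h
  have hvm : v < m := by
    have h2v : 2 ^ v ≤ j := Nat.le_mul_of_pos_right _ hu0
    have : (2:ℕ) ^ v < 2 ^ m := lt_of_le_of_lt h2v hjm
    exact (Nat.pow_lt_pow_iff_right (by norm_num)).1 this
  have h2m : 2 ^ m = 2 ^ v * 2 ^ (m - v) := by rw [← pow_add]; congr 1; omega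
  have key2 : 2 ^ (m - v) * Nat.choose (2 ^ m - 1) (j - 1) = Nat.choose (2 ^ m) j * u := by
    apply Nat.eq_of_mul_eq_mul_left (pow_pos (by norm_num : 0 < 2) v)
    rw [← mul_assoc, ← pow_add]
    have hmv : v + (m - v) = m := by omega
    rw [hmv, key, hjdef]; ring
  have hdvd : 2 ^ (m - v) ∣ Nat.choose (2 ^ m) j * u := ⟨_, key2.symm⟩
  have hcop : Nat.Coprime (2 ^ (m - v)) u :=
    Nat.Coprime.pow_left _ ((Nat.prime_two.coprime_iff_not_dvd).2 hu)
  exact hcop.dvd_of_dvd_mul_right hdvd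

lemma two_dvd_choose {t i : ℕ} (hi0 : 0 < i) (hit : i < 2 ^ t) :
    2 ∣ Nat.choose (2 ^ t) i := by
  obtain ⟨v, u, hu, rfl⟩ := Nat.exists_eq_pow_mul_and_not_dvd hi0.ne' 2 (by norm_num)
  have h := pow_dvd_choose hu hit
  have hvt : v < t := by
    have hu0 : 0 < u := Nat.pos_of_ne_zero (by rintro rfl; exact hu ⟨0, rfl⟩)
    have h2v : 2 ^ v ≤ 2 ^ v * u := Nat.le_mul_of_pos_right _ hu0
    exact (Nat.pow_lt_pow_iff_right (by norm_num)).1 (lt_of_le_of_lt h2v hit)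
  exact dvd_trans (dvd_pow_self 2 (by omega : t - v ≠ 0)) h

lemma four_dvd_choose {m j : ℕ} (hj0 : 0 < j) (hjm : j < 2 ^ m) (hjq : j ≠ 2 ^ (m - 1)) :
    4 ∣ Nat.choose (2 ^ m) j := by
  obtain ⟨v, u, hu, rfl⟩ := Nat.exists_eq_pow_mul_and_not_dvd hj0.ne' 2 (by norm_num)
  have hu0 : 0 < u := Nat.pos_of_ne_zero (by rintro rfl; exact hu ⟨0, rfl⟩)
  have hvm : v < m := by
    have h2v : 2 ^ v ≤ 2 ^ v * u := Nat.le_mul_of_pos_right _ hu0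
    exact (Nat.pow_lt_pow_iff_right (by norm_num)).1 (lt_of_le_of_lt h2v hjm)
  have hv2 : 2 ≤ m - v := by
    by_contra hc
    have hv : v = m - 1 := by omega
    subst hv
    have hu1 : u = 1 := by
      by_contra h1
      have hu3 : 3 ≤ u := by
        rcases Nat.even_or_odd u with he | ho
        · exact absurd he.two_dvd hu
        · omega
      have h2 : 2 ^ (m-1) * 2 ≤ 2 ^ (m-1) * u := by
        apply Nat.mul_le_mul_left; omega
      have h3 : 2 ^ (m-1) * 2 = 2 ^ m := by rw [← pow_succ]; congr 1; omega
      omega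
    exact hjq (by rw [hu1, mul_one])
  have h := pow_dvd_choose hu hjm
  exact dvd_trans (by
    have h4 : (4:ℕ) = 2 ^ 2 := by norm_num
    rw [h4]
    exact pow_dvd_pow 2 hv2) h

open Finset in
lemma central_mod_four {m : ℕ} (hm : 1 ≤ m) :
    Nat.choose (2 ^ m) (2 ^ (m - 1)) % 4 = 2 := by
  set s := 2 ^ (m - 1) with hs
  have hs0 : 0 < s := pow_pos (by norm_num) _
  have h2m : 2 ^ m = s + s := by
    rw [hs, ← two_mul, ← pow_succ']; congr 1; omega
  have hvdm : Nat.choose (2 ^ m) s = ∑ ij ∈ Finset.HasAntidiagonal.antidiagonal s,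
      Nat.choose s ij.1 * Nat.choose s ij.2 := by
    rw [h2m]; exact Nat.add_choose_eq s s s
  have h1 : ((0:ℕ), s) ∈ Finset.HasAntidiagonal.antidiagonal s := by simp
  have h2 : ((s:ℕ), 0) ∈ (Finset.HasAntidiagonal.antidiagonal s).erase (0, s) := by
    simp [Finset.mem_erase, Prod.ext_iff]
    omega
  rw [← Finset.add_sum_erase _ _ h1, ← Finset.add_sum_erase _ _ h2] at hvdm
  have hrest : 4 ∣ ∑ ij ∈ ((Finset.HasAntidiagonal.antidiagonal s).erase (0, s)).erase (s, 0),
      Nat.choose s ij.1 * Nat.choose s ij.2 := by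
    apply Finset.dvd_sum
    intro p hp
    simp only [Finset.mem_erase, Finset.HasAntidiagonal.mem_antidiagonal] at hp
    obtain ⟨hp1, hp2, hp3⟩ := hp
    have hne1 : p.1 ≠ 0 := by
      intro h0
      exact hp2 (Prod.ext h0 (by omega))
    have hne2 : p.2 ≠ 0 := by
      intro h0
      exact hp1 (Prod.ext (by omega) h0)
    have hlt1 : p.1 < 2 ^ (m - 1) := by omega
    have hlt2 : p.2 < 2 ^ (m - 1) := by omega
    have d1 : 2 ∣ Nat.choose s p.1 := two_dvd_choose (by omega) hlt1
    have d2 : 2 ∣ Nat.choose s p.2 := two_dvd_choose (by omega) hlt2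
    obtain ⟨a, ha⟩ := d1; obtain ⟨b, hb⟩ := d2
    exact ⟨a * b, by rw [ha, hb]; ring⟩
  simp only [Nat.choose_zero_right, Nat.choose_self, one_mul, mul_one] at hvdm
  omega


/-- Monomial `X^a` in the group ring `ℤ[ZMod n]`. -/
noncomputable def Wm (n : ℕ) (a : ℕ) : AddMonoidAlgebra ℤ (ZMod n) :=
  AddMonoidAlgebra.single ((a : ZMod n)) 1

lemma Wm_pow (n a j : ℕ) : Wm n a ^ j = Wm n (j * a) := by
  simp [Wm, AddMonoidAlgebra.single_pow, nsmul_eq_mul, Nat.cast_mul]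

lemma Wm_zero (n : ℕ) : Wm n 0 = 1 := by
  simp [Wm, AddMonoidAlgebra.one_def]

lemma Wm_apply (n a : ℕ) (b : ZMod n) :
    (Wm n a).coeff b = if ((a : ZMod n)) = b then 1 else 0 :=
  Finsupp.single_apply

lemma cast_mul_apply (n : ℕ) (c : ℤ) (f : AddMonoidAlgebra ℤ (ZMod n)) (b : ZMod n) :
    ((c : AddMonoidAlgebra ℤ (ZMod n)) * f).coeff b = c * f.coeff b := by
  rw [← zsmul_eq_mul, AddMonoidAlgebra.coeff_smul_apply, smul_eq_mul]

lemma duality (n : ℕ) (r : ℕ) (s : ZMod n) :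
    (ducciCoeff n r s : ℤ) = ((1 + Wm n 1) ^ r).coeff (s - 1) := by
  induction r generalizing s with
  | zero =>
    simp only [pow_zero, ducciCoeff]
    rw [AddMonoidAlgebra.one_def, AddMonoidAlgebra.coeff_single_apply]
    have : ((0 : ZMod n) = s - 1) ↔ (s = 1) := by
      constructor
      · intro h; have := h.symm; rwa [sub_eq_zero] at this
      · intro h; rw [h]; simp
    simp [this]
  | succ r ih =>
    show ((ducciCoeff n r s + ducciCoeff n r (s - 1) : ℕ) : ℤ) = _
    rw [pow_succ, mul_add, mul_one]
    rw [AddMonoidAlgebra.coeff_add, Finsupp.add_apply]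
    rw [show (Wm n 1) = AddMonoidAlgebra.single ((1:ℕ) : ZMod n) (1:ℤ) from rfl]
    rw [AddMonoidAlgebra.coeff_mul_single_apply]
    push_cast
    rw [ih s, ih (s - 1)]
    have h1 : (Wm n 1 : AddMonoidAlgebra ℤ (ZMod n)) = AddMonoidAlgebra.single ((1:ℕ) : ZMod n) (1:ℤ) := rfl
    rw [h1]
    norm_num [sub_sub]
    congr 1; ring

open Finset in
lemma P1 (k : ℕ) (hk : 2 ≤ k) : ∃ α : AddMonoidAlgebra ℤ (ZMod (2 ^ k)),
    (1 + Wm (2 ^ k) 1) ^ (2 * 2 ^ (k - 2)) =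
      1 + Wm (2 ^ k) (2 ^ (k - 2)) ^ 2 + 2 * Wm (2 ^ k) (2 ^ (k - 2))
        + 4 * α := by
  set n := 2 ^ k with hn
  set q := 2 ^ (k - 2) with hq
  set R := AddMonoidAlgebra ℤ (ZMod n) with hR
  have hq1 : 1 ≤ q := Nat.one_le_two_pow
  have h2q : 2 * q = 2 ^ (k - 1) := by
    rw [hq, ← pow_succ']; congr 1; omega
  set f : ℕ → R := fun i => (Nat.choose (2 * q) i : R) * Wm n i with hf
  have expand : (1 + Wm n 1) ^ (2 * q) = ∑ i ∈ Finset.range (2 * q + 1), f i := by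
    rw [add_comm (1 : R) (Wm n 1), add_pow]
    apply Finset.sum_congr rfl
    intro i _
    rw [hf]
    simp only [one_pow, mul_one, Wm_pow, mul_one]
    ring
  have h0 : (0 : ℕ) ∈ Finset.range (2 * q + 1) := by simp
  have h2qm : 2 * q ∈ (Finset.range (2 * q + 1)).erase 0 := by
    simp [Finset.mem_erase]; omega
  have hqm : q ∈ ((Finset.range (2 * q + 1)).erase 0).erase (2 * q) := by
    simp [Finset.mem_erase]; omega
  have hrest : (4 : R) ∣ ∑ i ∈ (((Finset.range (2 * q + 1)).erase 0).erase (2 * q)).erase q,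
      f i := by
    apply Finset.dvd_sum
    intro i hi
    simp only [Finset.mem_erase, Finset.mem_range] at hi
    obtain ⟨hiq, hi2q, hi0, hilt⟩ := hi
    have hdvd : 4 ∣ Nat.choose (2 * q) i := by
      have hne : i ≠ 2 ^ (k - 1 - 1) := by
        rw [show k - 1 - 1 = k - 2 by omega]; exact hiq
      rw [h2q]
      exact four_dvd_choose (by omega) (by omega) hne
    have : ((4:ℕ) : R) ∣ (Nat.choose (2 * q) i : R) := Nat.cast_dvd_cast hdvd
    rw [hf]
    exact Dvd.dvd.mul_right (by exact_mod_cast this) _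
  obtain ⟨γ, hγ⟩ := hrest
  obtain ⟨c, hC⟩ : ∃ c, Nat.choose (2 * q) q = 4 * c + 2 := by
    have h := central_mod_four (m := k - 1) (by omega)
    have hq' : (2:ℕ) ^ (k - 1 - 1) = q := by
      have he : k - 1 - 1 = k - 2 := by omega
      rw [he]
    rw [← h2q, hq'] at h
    exact ⟨Nat.choose (2 * q) q / 4, by omega⟩
  refine ⟨(c : ℕ) * Wm n q + γ, ?_⟩
  rw [expand, ← Finset.add_sum_erase _ f h0, ← Finset.add_sum_erase _ f h2qm,
    ← Finset.add_sum_erase _ f hqm, hγ]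
  have hf0 : f 0 = 1 := by simp [hf, Wm_zero]
  have hf2q : f (2 * q) = Wm n q ^ 2 := by
    simp only [hf, Nat.choose_self, Nat.cast_one, one_mul]
    rw [Wm_pow]
  have hfq : f q = 2 * Wm n q + 4 * ((c : ℕ) * Wm n q) := by
    show (Nat.choose (2 * q) q : R) * Wm n q = _
    rw [hC]
    push_cast
    ring
  rw [hf0, hf2q, hfq]
  ring

lemma mainlemma (k : ℕ) (hk : 2 ≤ k) (m : ℕ) : ∃ α β : AddMonoidAlgebra ℤ (ZMod (2 ^ k)),
    (1 + Wm (2 ^ k) 1) ^ ((m + 2) * (2 * 2 ^ (k - 2))) =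
      2 ^ (m + 1) * (Wm (2 ^ k) (2 ^ (k - 2)) ^ (m + 2) * (1 + Wm (2 ^ k) (2 ^ (k - 2)) ^ 2))
      + 2 ^ (m + 2) * Wm (2 ^ k) (2 ^ (k - 2)) ^ (m + 2)
      + 2 ^ (m + 3) * α
      + 2 ^ (m + 2) * ((1 + Wm (2 ^ k) (2 ^ (k - 2)) ^ 2) * β) := by
  set n := 2 ^ k with hn
  set q := 2 ^ (k - 2) with hq
  set Y := Wm n q with hY
  obtain ⟨α₀, hP1⟩ := P1 k hk
  have h4q : 4 * q = n := by
    rw [hn, hq, show k = (k - 2) + 2 from by omega]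
    rw [show (k - 2) + 2 - 2 = k - 2 from by omega, pow_add]
    ring
  have hY4 : Y ^ 4 = 1 := by
    rw [hY, Wm_pow, h4q]
    show AddMonoidAlgebra.single ((n : ℕ) : ZMod n) (1:ℤ) = 1
    rw [ZMod.natCast_self, ← AddMonoidAlgebra.one_def]
  induction m with
  | zero =>
    rw [show (0 + 2) * (2 * q) = (2 * q) * 2 from by ring, pow_mul, hP1]
    exact ⟨2 * Y * α₀ + 2 * α₀ ^ 2, Y + 2 * α₀, by linear_combination (-1 : AddMonoidAlgebra ℤ (ZMod n)) * hY4⟩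
  | succ m ih =>
    obtain ⟨α, β, ihe⟩ := ih
    rw [show (m + 1 + 2) * (2 * q) = (m + 2) * (2 * q) + 2 * q from by ring, pow_add, ihe, hP1]
    exact ⟨Y ^ (m + 2) * α₀ + α * Y + 2 * α * α₀,
           Y ^ (m + 2) + Y ^ (m + 2) * α₀ + α + β + β * Y + 2 * β * α₀,
           by linear_combination (2 ^ (m + 1) * Y ^ (m + 2) + 2 ^ (m + 2) * β) * hY4⟩

end DucciAux

open DucciAux

/-- For `n = 2^k`, `k ≥ 2`, `l ≥ 2`: `a_{l·2^(k-1), l·2^(k-2)+1} ≡ 2^(l-1) (mod 2^l)`. -/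
theorem ducciCoeff_central (k l : ℕ) (hk : 2 ≤ k) (hl : 2 ≤ l) :
    ducciCoeff (2 ^ k) (l * 2 ^ (k - 1)) ((l * 2 ^ (k - 2) + 1 : ℕ) : ZMod (2 ^ k))
      ≡ 2 ^ (l - 1) [MOD 2 ^ l] := by
  obtain ⟨m, rfl⟩ : ∃ m, l = m + 2 := ⟨l - 2, by omega⟩
  set n := 2 ^ k with hn
  set q := 2 ^ (k - 2) with hq
  set Y := Wm n q with hY
  have hq1 : 1 ≤ q := Nat.one_le_two_pow
  have h4q : 4 * q = n := by
    rw [hn, hq, show k = (k - 2) + 2 from by omega]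
    rw [show (k - 2) + 2 - 2 = k - 2 from by omega, pow_add]
    ring
  have h2q : 2 ^ (k - 1) = 2 * q := by
    rw [hq, ← pow_succ']; congr 1; omega
  obtain ⟨α, β, hmain⟩ := mainlemma k hk m
  set γ : AddMonoidAlgebra ℤ (ZMod n) := Y ^ (m + 2) + (2 * α + (1 + Y ^ 2) * β) with hγ
  -- massage the main identity
  have hmain' : (1 + Wm n 1) ^ ((m + 2) * (2 * q)) =
      ((2 ^ (m + 1) : ℤ) : AddMonoidAlgebra ℤ (ZMod n)) * (Y ^ (m + 2) + Y ^ (m + 4))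
      + ((2 ^ (m + 2) : ℤ) : AddMonoidAlgebra ℤ (ZMod n)) * γ := by
    rw [hmain, hγ]; push_cast; ring
  set b : ZMod n := (((m + 2) * q : ℕ) : ZMod n) with hb
  have hb1 : (Y ^ (m + 2)).coeff b = 1 := by
    rw [hY, Wm_pow, Wm_apply, if_pos rfl]
  have hb0 : (Y ^ (m + 4)).coeff b = 0 := by
    rw [hY, Wm_pow, Wm_apply, if_neg]
    intro hcon
    rw [hb, ZMod.natCast_eq_natCast_iff] at hcon
    have hco : ((m + 2) * q + 2 * q) ≡ ((m + 2) * q + 0) [MOD n] := by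
      calc (m + 2) * q + 2 * q = (m + 4) * q := by ring
        _ ≡ (m + 2) * q [MOD n] := hcon
        _ = (m + 2) * q + 0 := by ring
    have hdvd : n ∣ 2 * q := (Nat.modEq_zero_iff_dvd).1 (Nat.ModEq.add_left_cancel' _ hco)
    have := Nat.le_of_dvd (by omega) hdvd
    omega
  have hval : ((1 + Wm n 1) ^ ((m + 2) * (2 * q))).coeff b
      = 2 ^ (m + 1) + 2 ^ (m + 2) * (γ.coeff b) := by
    rw [hmain']
    rw [AddMonoidAlgebra.coeff_add, Finsupp.add_apply, cast_mul_apply, cast_mul_apply, AddMonoidAlgebra.coeff_add, Finsupp.add_apply, hb1, hb0]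
    ring
  set J : ℤ := γ.coeff b with hJ
  have hfinal : (ducciCoeff n ((m + 2) * 2 ^ (k - 1))
      (((m + 2) * 2 ^ (k - 2) + 1 : ℕ) : ZMod n) : ℤ) = 2 ^ (m + 1) + 2 ^ (m + 2) * J := by
    rw [duality]
    have hsub : ((((m + 2) * 2 ^ (k - 2) + 1 : ℕ)) : ZMod n) - 1 = b := by
      rw [hb]; push_cast; ring_nf; norm_cast
    rw [hsub, show (m + 2) * 2 ^ (k - 1) = (m + 2) * (2 * q) from by rw [h2q], hval]
  rw [← Int.natCast_modEq_iff]
  refine Int.ModEq.symm (Int.modEq_iff_dvd.mpr ⟨J, ?_⟩)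
  rw [hfinal]
  push_cast [show m + 2 - 1 = m + 1 from rfl]
  ring
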